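/- arXiv:1203.2473 — 2 statements merged into one kernel-verified Lean document; each statement's English description precedes it below -/
import Mathlib

section
/- For positive integers n and k ≥ 1 and i, j ∈ Z/nZ, the number of walks of length k from i to j in X_n equals (n/rad(n))^{k-1} times the number of walks of length k from i mod rad(n) to j mod rad(n) in X_{rad(n)}. -/
open Finset

noncomputable def walkCount {V : Type*} (G : SimpleGraph V) (k : ℕ) (u v : V) : ℕ :=
  Nat.card {p : G.Walk u v // p.length = k}

def unitaryCayley (n : ℕ) : SimpleGraph (ZMod n) where
  Adj a b := a ≠ b ∧ IsUnit (a - b)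
  symm := ⟨by
    rintro a b ⟨hne, hu⟩
    exact ⟨hne.symm, by rw [show b - a = -(a - b) by ring]; exact hu.neg⟩⟩
  loopless := ⟨fun a h => h.1 rfl⟩

def rad (n : ℕ) : ℕ := n.primeFactors.prod id

lemma rad_dvd (n : ℕ) : rad n ∣ n := by
  simpa [rad] using Nat.prod_primeFactors_dvd n

lemma rad_pos (n : ℕ) (hn : 0 < n) : 0 < rad n :=
  Finset.prod_pos fun p hp => (Nat.prime_of_mem_primeFactors hp).pos

lemma coprime_rad (m n : ℕ) (hn : 0 < n) : Nat.Coprime m n ↔ Nat.Coprime m (rad n) := by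
  rw [rad, show (n.primeFactors.prod id) = ∏ p ∈ n.primeFactors, p from rfl,
    Nat.coprime_prod_right_iff]
  constructor
  · intro h p hp
    exact h.coprime_dvd_right (Nat.dvd_of_mem_primeFactors hp)
  · intro h
    by_contra hc
    obtain ⟨p, pp, hpd⟩ := Nat.exists_prime_and_dvd hc
    have hpn : p ∣ n := hpd.trans (Nat.gcd_dvd_right m n)
    have hpm : p ∣ m := hpd.trans (Nat.gcd_dvd_left m n)
    have hcop := h p (Nat.mem_primeFactors.2 ⟨pp, hpn, hn.ne'⟩)
    have : p ∣ Nat.gcd m p := Nat.dvd_gcd hpm dvd_rfl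
    rw [hcop] at this
    exact pp.one_lt.ne' (Nat.dvd_one.mp this)

theorem test : True := trivial

instance (n : ℕ) [NeZero n] : NeZero (rad n) :=
  ⟨(rad_pos n (Nat.pos_of_ne_zero (NeZero.ne n))).ne'⟩

noncomputable instance (n : ℕ) : DecidableRel (unitaryCayley n).Adj := Classical.decRel _

lemma isUnit_cast_iff (n : ℕ) (hn : 0 < n) (x : ZMod n) :
    IsUnit (ZMod.castHom (rad_dvd n) (ZMod (rad n)) x) ↔ IsUnit x := by
  haveI : NeZero n := ⟨hn.ne'⟩
  have h1 : ((x.val : ℕ) : ZMod n) = x := by rw [ZMod.natCast_val, ZMod.cast_id]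
  have h2 : (ZMod.castHom (rad_dvd n) (ZMod (rad n))) x = ((x.val : ℕ) : ZMod (rad n)) := by
    rw [ZMod.castHom_apply, ZMod.natCast_val]
  rw [h2, ZMod.isUnit_iff_coprime, ← coprime_rad _ _ hn]
  conv_rhs => rw [← h1]
  rw [ZMod.isUnit_iff_coprime]

lemma adj_iff_isUnit {m : ℕ} (hm : 1 < m) (a b : ZMod m) :
    (unitaryCayley m).Adj a b ↔ IsUnit (a - b) := by
  haveI : Fact (1 < m) := ⟨hm⟩
  constructor
  · exact fun h => h.2
  · intro h
    refine ⟨?_, h⟩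
    rintro rfl
    rw [sub_self] at h
    exact not_isUnit_zero h

lemma one_lt_rad (n : ℕ) (hn : 1 < n) : 1 < rad n := by
  obtain ⟨p, pp, hpn⟩ := Nat.exists_prime_and_dvd (by omega : n ≠ 1)
  have hmem : p ∈ n.primeFactors := Nat.mem_primeFactors.2 ⟨pp, hpn, by omega⟩
  have : p ∣ rad n := Finset.dvd_prod_of_mem id hmem
  have hr : 0 < rad n := rad_pos n (by omega)
  calc 1 < p := pp.one_lt
    _ ≤ rad n := Nat.le_of_dvd hr this

lemma adj_cast_iff (n : ℕ) (hn : 0 < n) (x y : ZMod n) :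
    (unitaryCayley (rad n)).Adj (ZMod.castHom (rad_dvd n) (ZMod (rad n)) x)
      (ZMod.castHom (rad_dvd n) (ZMod (rad n)) y) ↔ (unitaryCayley n).Adj x y := by
  rcases eq_or_lt_of_le (show 1 ≤ n from hn) with h1 | h2
  · -- n = 1
    haveI : NeZero n := ⟨hn.ne'⟩
    have hxy : x = y := by
      have : Subsingleton (ZMod n) := by rw [← h1]; exact ⟨fun a b => Subsingleton.elim a b⟩
      exact Subsingleton.elim x y
    subst hxy
    simp [unitaryCayley]
  · rw [adj_iff_isUnit h2, adj_iff_isUnit (one_lt_rad n h2), ← map_sub,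
      isUnit_cast_iff n hn]

lemma card_fiber (n : ℕ) [NeZero n] (y : ZMod (rad n)) :
    (Finset.univ.filter fun x : ZMod n =>
        ZMod.castHom (rad_dvd n) (ZMod (rad n)) x = y).card = n / rad n := by
  have hn : 0 < n := Nat.pos_of_ne_zero (NeZero.ne n)
  set π := ZMod.castHom (rad_dvd n) (ZMod (rad n)) with hπ
  have hlift : ∀ z : ZMod (rad n), π ((z.val : ℕ) : ZMod n) = z := by
    intro z
    rw [map_natCast, ZMod.natCast_val, ZMod.cast_id]
  have key : ∀ z : ZMod (rad n),
      (Finset.univ.filter fun x : ZMod n => π x = z).card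
        = (Finset.univ.filter fun x : ZMod n => π x = 0).card := by
    intro z
    refine Finset.card_bij' (fun x _ => x - ((z.val : ℕ) : ZMod n))
      (fun x _ => x + ((z.val : ℕ) : ZMod n)) ?_ ?_ ?_ ?_
    · intro a ha
      simp only [Finset.mem_filter, Finset.mem_univ, true_and] at ha ⊢
      rw [map_sub, ha, hlift, sub_self]
    · intro a ha
      simp only [Finset.mem_filter, Finset.mem_univ, true_and] at ha ⊢
      rw [map_add, ha, hlift, zero_add]
    · intro a _; ring
    · intro a _; ring
  have htot : (Finset.univ : Finset (ZMod n)).card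
      = ∑ z : ZMod (rad n), (Finset.univ.filter fun x : ZMod n => π x = z).card :=
    Finset.card_eq_sum_card_fiberwise fun x _ => Finset.mem_univ (π x)
  rw [Finset.card_univ, ZMod.card] at htot
  have hsum : ∑ z : ZMod (rad n), (Finset.univ.filter fun x : ZMod n => π x = z).card
      = (rad n) * (Finset.univ.filter fun x : ZMod n => π x = 0).card := by
    rw [Finset.sum_congr rfl fun z _ => key z, Finset.sum_const, Finset.card_univ, ZMod.card,
      smul_eq_mul]
  have htot2 := htot.trans hsum
  rw [key y]
  exact (Nat.div_eq_of_eq_mul_left (rad_pos n hn) (htot2.trans (mul_comm _ _))).symm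

lemma sum_fiber (n : ℕ) [NeZero n] (F : ZMod (rad n) → ℕ) :
    ∑ x : ZMod n, F (ZMod.castHom (rad_dvd n) (ZMod (rad n)) x)
      = (n / rad n) * ∑ y : ZMod (rad n), F y := by
  rw [← Finset.sum_fiberwise' Finset.univ (ZMod.castHom (rad_dvd n) (ZMod (rad n))) F,
    Finset.mul_sum]
  refine Finset.sum_congr rfl fun y _ => ?_
  rw [Finset.sum_const, card_fiber n y, smul_eq_mul]

lemma pow_entry (n : ℕ) [NeZero n] (k : ℕ) (i j : ZMod n) :
    ((unitaryCayley n).adjMatrix ℕ ^ (k + 1)) i j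
      = (n / rad n) ^ k *
        ((unitaryCayley (rad n)).adjMatrix ℕ ^ (k + 1))
          (ZMod.castHom (rad_dvd n) (ZMod (rad n)) i)
          (ZMod.castHom (rad_dvd n) (ZMod (rad n)) j) := by
  have hn : 0 < n := Nat.pos_of_ne_zero (NeZero.ne n)
  set π := ZMod.castHom (rad_dvd n) (ZMod (rad n)) with hπ
  have hA : ∀ x y : ZMod n, (unitaryCayley n).adjMatrix ℕ x y
      = (unitaryCayley (rad n)).adjMatrix ℕ (π x) (π y) := by
    intro x y
    simp only [SimpleGraph.adjMatrix_apply]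
    exact (if_congr (adj_cast_iff n hn x y) rfl rfl).symm
  induction k generalizing j with
  | zero =>
    simp only [zero_add, pow_zero, pow_one, one_mul]
    exact hA i j
  | succ k ih =>
    rw [pow_succ, pow_succ ((unitaryCayley (rad n)).adjMatrix ℕ), Matrix.mul_apply,
      Matrix.mul_apply]
    calc ∑ x : ZMod n, ((unitaryCayley n).adjMatrix ℕ ^ (k + 1)) i x
          * (unitaryCayley n).adjMatrix ℕ x j
        = ∑ x : ZMod n, (n / rad n) ^ k *
            (((unitaryCayley (rad n)).adjMatrix ℕ ^ (k + 1)) (π i) (π x)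
              * (unitaryCayley (rad n)).adjMatrix ℕ (π x) (π j)) := by
          refine Finset.sum_congr rfl fun x _ => ?_
          rw [ih x, hA x j, mul_assoc]
      _ = (n / rad n) ^ k * ∑ x : ZMod n,
            (fun y => ((unitaryCayley (rad n)).adjMatrix ℕ ^ (k + 1)) (π i) y
              * (unitaryCayley (rad n)).adjMatrix ℕ y (π j)) (π x) := by
          rw [Finset.mul_sum]
      _ = (n / rad n) ^ k * ((n / rad n) * ∑ y : ZMod (rad n),
            ((unitaryCayley (rad n)).adjMatrix ℕ ^ (k + 1)) (π i) y
              * (unitaryCayley (rad n)).adjMatrix ℕ y (π j)) := by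
          exact congrArg (HMul.hMul ((n / rad n) ^ k))
            (sum_fiber n (fun y => ((unitaryCayley (rad n)).adjMatrix ℕ ^ (k + 1)) (π i) y
              * (unitaryCayley (rad n)).adjMatrix ℕ y (π j)))
      _ = (n / rad n) ^ (k + 1) * ∑ y : ZMod (rad n),
            ((unitaryCayley (rad n)).adjMatrix ℕ ^ (k + 1)) (π i) y
              * (unitaryCayley (rad n)).adjMatrix ℕ y (π j) := by
          ring

lemma walkCount_eq_pow {V : Type*} [Fintype V] [DecidableEq V] (G : SimpleGraph V)
    [DecidableRel G.Adj] (k : ℕ) (u v : V) :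
    walkCount G k u v = (G.adjMatrix ℕ ^ k) u v := by
  rw [SimpleGraph.adjMatrix_pow_apply_eq_card_walk, Nat.cast_id, walkCount,
    Nat.card_eq_fintype_card]
  exact Fintype.card_congr (Equiv.subtypeEquivRight fun _ => Iff.rfl)

theorem unitaryCayley_walks_via_rad (n k : ℕ) (hn : 0 < n) (hk : 1 ≤ k)
    (i j : ZMod n) :
    walkCount (unitaryCayley n) k i j =
      (n / rad n) ^ (k - 1) *
        walkCount (unitaryCayley (rad n)) k (i.val : ZMod (rad n)) (j.val : ZMod (rad n)) := by
  haveI : NeZero n := ⟨hn.ne'⟩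
  obtain ⟨k, rfl⟩ : ∃ k', k = k' + 1 := ⟨k - 1, (Nat.succ_pred_eq_of_pos hk).symm⟩
  have hcast : ∀ x : ZMod n, ((x.val : ℕ) : ZMod (rad n))
      = ZMod.castHom (rad_dvd n) (ZMod (rad n)) x := by
    intro x
    rw [ZMod.castHom_apply, ZMod.natCast_val]
  rw [walkCount_eq_pow, walkCount_eq_pow, pow_entry, Nat.add_sub_cancel, hcast, hcast]
end

section
/- For any positive integer n and vertex v of X_n, the number of closed walks of length 2 at v equals φ(n), and more generally the number of walks of length 2 from 0 to r in X_n is (n/rad(n)) · ∏_{p|n, p|r}(p-1) · ∏_{p|n, p∤r}(p-2). -/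
open Finset

/-- Walks of length 2 from `u` to `v` correspond to common neighbours. -/
def walkTwoEquiv {V : Type*} (G : SimpleGraph V) (u v : V) :
    {p : G.Walk u v // p.length = 2} ≃ {w : V // G.Adj u w ∧ G.Adj w v} where
  toFun p := ⟨p.1.getVert 1,
    by simpa using p.1.adj_getVert_succ (i := 0) (by omega),
    by
      have h := p.1.adj_getVert_succ (i := 1) (by omega)
      have h2 : p.1.getVert 2 = v := by
        have h3 := p.1.getVert_length; rw [p.2] at h3; exact h3
      rwa [show 1 + 1 = 2 from rfl, h2] at h⟩
  invFun w := ⟨.cons w.2.1 (.cons w.2.2 .nil), rfl⟩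
  left_inv := by
    rintro ⟨p, hp⟩
    cases p with
    | nil => simp at hp
    | cons h q =>
      cases q with
      | nil => simp at hp
      | cons h' q' =>
        cases q' with
        | nil => rfl
        | cons h'' q'' => simp [SimpleGraph.Walk.length_cons] at hp
  right_inv w := rfl

lemma fiber_card (p k : ℕ) [NeZero p] (hp : p.Prime) (y : ZMod p) :
    Nat.card {x : ZMod (p ^ (k + 1)) //
      ZMod.castHom (dvd_pow_self p (Nat.succ_ne_zero k)) (ZMod p) x = y} = p ^ k := by
  haveI : Fact p.Prime := ⟨hp⟩
  classical
  set π := ZMod.castHom (dvd_pow_self p (Nat.succ_ne_zero k)) (ZMod p) with hπ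
  rw [Nat.card_eq_fintype_card, Fintype.card_subtype]
  have hsame : ∀ y : ZMod p, (univ.filter fun x => π x = y).card
      = (univ.filter fun x => π x = 0).card := by
    intro y
    apply Finset.card_bij' (fun x _ => x - (y.val : ZMod (p ^ (k + 1))))
      (fun x _ => x + (y.val : ZMod (p ^ (k + 1))))
    · intro a ha
      simp only [mem_filter, mem_univ, true_and] at ha ⊢
      rw [map_sub, ha, map_natCast, ZMod.natCast_zmod_val]
      ring
    · intro a ha
      simp only [mem_filter, mem_univ, true_and] at ha ⊢
      rw [map_add, ha, map_natCast, ZMod.natCast_zmod_val]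
      ring
    · intro a _; ring
    · intro a _; ring
  have hsum : (univ : Finset (ZMod (p ^ (k + 1)))).card
      = ∑ y : ZMod p, (univ.filter fun x => π x = y).card :=
    Finset.card_eq_sum_card_fiberwise (fun x _ => mem_univ _)
  simp only [hsame, Finset.sum_const, card_univ, ZMod.card, smul_eq_mul] at hsum
  have hc : (univ.filter fun x => π x = 0).card = p ^ k :=
    Nat.eq_of_mul_eq_mul_left hp.pos (by rw [← hsum, pow_succ]; ring)
  exact (hsame y).trans hc

lemma count_pullback {A B : Type*} [Finite A] [Finite B] (f : A → B) (P : B → Prop) (c : ℕ)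
    (hf : ∀ y : B, Nat.card {x : A // f x = y} = c) :
    Nat.card {x : A // P (f x)} = c * Nat.card {y : B // P y} := by
  classical
  cases nonempty_fintype A
  cases nonempty_fintype B
  simp only [Nat.card_eq_fintype_card, Fintype.card_subtype] at hf ⊢
  rw [Finset.card_eq_sum_card_fiberwise
    (f := f) (t := univ.filter P) (fun x hx => by simp_all)]
  rw [Finset.sum_congr rfl (fun y hy => ?_), Finset.sum_const, smul_eq_mul, mul_comm]
  have : (univ.filter fun x => P (f x)).filter (fun x => f x = y)
      = univ.filter fun x => f x = y := by
    ext x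
    simp only [mem_filter, mem_univ, true_and] at hy ⊢
    exact ⟨fun h => h.2, fun h => ⟨h ▸ hy, h⟩⟩
  rw [this, hf y]

lemma isUnit_iff_pow (p k : ℕ) (hp : p.Prime) (x : ZMod (p ^ (k + 1))) :
    IsUnit x ↔ ZMod.castHom (dvd_pow_self p (Nat.succ_ne_zero k)) (ZMod p) x ≠ 0 := by
  haveI : Fact p.Prime := ⟨hp⟩
  haveI : NeZero p := ⟨hp.ne_zero⟩
  set π := ZMod.castHom (dvd_pow_self p (Nat.succ_ne_zero k)) (ZMod p)
  constructor
  · intro h hz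
    have := h.map π
    rw [hz] at this
    exact this.ne_zero rfl
  · intro h
    have hx : x = ((x.val : ℕ) : ZMod (p ^ (k + 1))) := (ZMod.natCast_zmod_val x).symm
    rw [hx, ZMod.isUnit_iff_coprime]
    have : ¬ p ∣ x.val := by
      intro hd
      apply h
      rw [hx, map_natCast, (ZMod.natCast_eq_zero_iff _ _)]
      exact hd
    exact (Nat.Coprime.pow_right _ (((Nat.Prime.coprime_iff_not_dvd hp).2 this).symm))

lemma F_prime_pow (r' p k : ℕ) (hp : p.Prime) :
    Nat.card {x : ZMod (p ^ (k + 1)) // IsUnit x ∧ IsUnit (x - (r' : ZMod (p ^ (k + 1))))}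
      = p ^ k * (if p ∣ r' then p - 1 else p - 2) := by
  classical
  haveI : Fact p.Prime := ⟨hp⟩
  haveI : NeZero p := ⟨hp.ne_zero⟩
  set π := ZMod.castHom (dvd_pow_self p (Nat.succ_ne_zero k)) (ZMod p) with hπ
  set s : ZMod p := (r' : ZMod p) with hs
  have hcond : ∀ x : ZMod (p ^ (k + 1)),
      (IsUnit x ∧ IsUnit (x - (r' : ZMod (p ^ (k + 1))))) ↔ ((fun y => y ≠ 0 ∧ y ≠ s) (π x)) := by
    intro x
    rw [isUnit_iff_pow p k hp, isUnit_iff_pow p k hp, map_sub, map_natCast, sub_ne_zero, hs]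
  rw [Nat.card_congr (Equiv.subtypeEquivRight hcond),
    count_pullback π (fun y => y ≠ 0 ∧ y ≠ s) (p ^ k) (fun y => fiber_card p k hp y)]
  congr 1
  rw [Nat.card_eq_fintype_card, Fintype.card_subtype]
  have hset : (univ.filter fun y : ZMod p => y ≠ 0 ∧ y ≠ s) = univ \ {0, s} := by
    ext y
    simp [not_or]
  rw [hset, Finset.card_sdiff_of_subset (subset_univ _), card_univ, ZMod.card]
  have hs0 : s = 0 ↔ p ∣ r' := ZMod.natCast_eq_zero_iff r' p
  by_cases hd : p ∣ r'
  · rw [if_pos hd, hs0.2 hd]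
    simp
  · rw [if_neg hd]
    have hne : s ≠ 0 := fun h => hd (hs0.1 h)
    rw [Finset.card_insert_of_notMem (by simpa using hne.symm), Finset.card_singleton]

noncomputable def Fcnt (r' n : ℕ) : ℕ :=
  Nat.card {x : ZMod n // IsUnit x ∧ IsUnit (x - (r' : ZMod n))}

lemma prod_isUnit_iff {M N : Type*} [Monoid M] [Monoid N] (a : M) (b : N) :
    IsUnit (a, b) ↔ IsUnit a ∧ IsUnit b := by
  constructor
  · intro h
    exact ⟨h.map (MonoidHom.fst M N), h.map (MonoidHom.snd M N)⟩
  · rintro ⟨⟨u, hu⟩, ⟨w, hw⟩⟩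
    exact ⟨MulEquiv.prodUnits.symm (u, w), by simp [MulEquiv.prodUnits, hu, hw]⟩

lemma Fcnt_one (r' : ℕ) : Fcnt r' 1 = 1 := by
  rw [Fcnt, Nat.card_eq_one_iff_unique]
  constructor
  · constructor
    intro a b
    exact Subtype.ext (Subsingleton.elim _ _)
  · exact ⟨⟨0, isUnit_of_subsingleton _, isUnit_of_subsingleton _⟩⟩

lemma Fcnt_mul (r' : ℕ) {m n : ℕ} (h : m.Coprime n) :
    Fcnt r' (m * n) = Fcnt r' m * Fcnt r' n := by
  rcases eq_or_ne m 0 with rfl | hm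
  · rw [Nat.coprime_zero_left] at h
    subst h
    simp [Fcnt_one]
  rcases eq_or_ne n 0 with rfl | hn0
  · rw [Nat.coprime_zero_right] at h
    subst h
    simp [Fcnt_one]
  let e := ZMod.chineseRemainder h
  have key : ∀ x : ZMod (m * n),
      (IsUnit x ∧ IsUnit (x - (r' : ZMod (m * n)))) ↔
      ((IsUnit (e x).1 ∧ IsUnit ((e x).1 - (r' : ZMod m))) ∧
        (IsUnit (e x).2 ∧ IsUnit ((e x).2 - (r' : ZMod n)))) := by
    intro x
    have hu : ∀ z : ZMod (m * n), IsUnit z ↔ IsUnit (e z).1 ∧ IsUnit (e z).2 := by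
      intro z
      rw [← prod_isUnit_iff]
      constructor
      · intro hz; exact hz.map e.toRingHom
      · intro hz
        have := hz.map e.symm.toRingHom
        simpa using this
    have hsub : e (x - (r' : ZMod (m * n)))
        = ((e x).1 - (r' : ZMod m), (e x).2 - (r' : ZMod n)) := by
      rw [map_sub, map_natCast]
      rfl
    rw [hu x, hu (x - _), hsub]
    constructor
    · rintro ⟨⟨h1, h2⟩, h3, h4⟩; exact ⟨⟨h1, h3⟩, h2, h4⟩
    · rintro ⟨⟨h1, h3⟩, h2, h4⟩; exact ⟨⟨h1, h2⟩, h3, h4⟩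
  have e2 : {x : ZMod (m * n) // (IsUnit x ∧ IsUnit (x - (r' : ZMod (m * n))))} ≃
      {a : ZMod m // IsUnit a ∧ IsUnit (a - (r' : ZMod m))} ×
      {b : ZMod n // IsUnit b ∧ IsUnit (b - (r' : ZMod n))} :=
    (Equiv.subtypeEquivRight key).trans
      ((Equiv.subtypeEquiv
        (q := fun z : ZMod m × ZMod n => (IsUnit z.1 ∧ IsUnit (z.1 - (r' : ZMod m))) ∧
          (IsUnit z.2 ∧ IsUnit (z.2 - (r' : ZMod n)))) e.toEquiv
        (fun x => Iff.rfl)).trans (Equiv.subtypeProdEquivProd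
        (p := fun a : ZMod m => IsUnit a ∧ IsUnit (a - (r' : ZMod m)))
        (q := fun b : ZMod n => IsUnit b ∧ IsUnit (b - (r' : ZMod n)))))
  rw [Fcnt, Fcnt, Fcnt, Nat.card_congr e2, Nat.card_prod]

lemma Fcnt_formula (r' n : ℕ) (hn : n ≠ 0) :
    Fcnt r' n = (n / rad n) * (∏ p ∈ n.primeFactors.filter (fun p => p ∣ r'), (p - 1))
      * ∏ p ∈ n.primeFactors.filter (fun p => ¬ p ∣ r'), (p - 2) := by
  classical
  rw [Nat.multiplicative_factorization (Fcnt r') (fun x y h => Fcnt_mul r' h) (Fcnt_one r') hn,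
    Nat.prod_factorization_eq_prod_primeFactors]
  have hterm : ∀ p ∈ n.primeFactors, Fcnt r' (p ^ n.factorization p)
      = p ^ (n.factorization p - 1) * (if p ∣ r' then p - 1 else p - 2) := by
    intro p hp
    have hprime : p.Prime := Nat.prime_of_mem_primeFactors hp
    have hpos : 1 ≤ n.factorization p :=
      (Nat.Prime.factorization_pos_of_dvd hprime hn (Nat.dvd_of_mem_primeFactors hp))
    have : p ^ n.factorization p = p ^ ((n.factorization p - 1) + 1) := by
      congr 1; omega
    rw [this]
    exact F_prime_pow r' p (n.factorization p - 1) hprime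
  rw [Finset.prod_congr rfl hterm, Finset.prod_mul_distrib, Finset.prod_ite]
  have hdiv : n / rad n = ∏ p ∈ n.primeFactors, p ^ (n.factorization p - 1) := by
    have key : rad n * ∏ p ∈ n.primeFactors, p ^ (n.factorization p - 1) = n := by
      rw [rad, Finset.prod_mul_distrib.symm]
      have : ∀ p ∈ n.primeFactors,
          id p * p ^ (n.factorization p - 1) = p ^ n.factorization p := by
        intro p hp
        have hpos : 1 ≤ n.factorization p :=
          Nat.Prime.factorization_pos_of_dvd (Nat.prime_of_mem_primeFactors hp) hn
            (Nat.dvd_of_mem_primeFactors hp)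
        rw [id]
        rw [← pow_succ']
        congr 1; omega
      rw [Finset.prod_congr rfl this, ← Nat.prod_factorization_eq_prod_primeFactors,
        Nat.factorization_prod_pow_eq_self hn]
    have hradpos : 0 < rad n := by
      rw [rad]
      exact Finset.prod_pos fun p hp => (Nat.prime_of_mem_primeFactors hp).pos
    exact Nat.div_eq_of_eq_mul_right hradpos key.symm
  rw [hdiv]
  ring

theorem two_walks_unitaryCayley (n : ℕ) (hn : 1 < n) :
    (∀ v : ZMod n, walkCount (unitaryCayley n) 2 v v = Nat.totient n) ∧
      ∀ r : ZMod n, walkCount (unitaryCayley n) 2 0 r =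
        (n / rad n) * (∏ p ∈ n.primeFactors.filter (fun p => (p : ℕ) ∣ r.val), (p - 1))
          * ∏ p ∈ n.primeFactors.filter (fun p => ¬ (p : ℕ) ∣ r.val), (p - 2) := by
  haveI : NeZero n := ⟨by omega⟩
  haveI : Fact (1 < n) := ⟨hn⟩
  have hwc : ∀ u v : ZMod n, walkCount (unitaryCayley n) 2 u v
      = Nat.card {w : ZMod n // (unitaryCayley n).Adj u w ∧ (unitaryCayley n).Adj w v} :=
    fun u v => Nat.card_congr (walkTwoEquiv (unitaryCayley n) u v)
  constructor
  · intro v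
    rw [hwc v v]
    have h1 : ∀ w : ZMod n,
        ((unitaryCayley n).Adj v w ∧ (unitaryCayley n).Adj w v) ↔ IsUnit (v - w) := by
      intro w
      constructor
      · exact fun h => h.1.2
      · intro h
        have hne : v ≠ w := fun he => h.ne_zero (by rw [he, sub_self])
        exact ⟨⟨hne, h⟩, (unitaryCayley n).symm.symm _ _ ⟨hne, h⟩⟩
    rw [Nat.card_congr (Equiv.subtypeEquivRight h1)]
    have e3 : {w : ZMod n // IsUnit (v - w)} ≃ {z : ZMod n // IsUnit z} :=
      { toFun := fun w => ⟨v - w.1, w.2⟩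
        invFun := fun z => ⟨v - z.1, by rw [sub_sub_cancel]; exact z.2⟩
        left_inv := fun w => Subtype.ext (sub_sub_cancel v w.1)
        right_inv := fun z => Subtype.ext (sub_sub_cancel v z.1) }
    rw [Nat.card_congr e3, ← ZMod.card_units_eq_totient n, ← Nat.card_eq_fintype_card]
    exact Nat.card_congr ⟨fun x => x.2.unit, fun u => ⟨u, u.isUnit⟩,
      fun x => Subtype.ext x.2.unit_spec, fun u => Units.ext u.isUnit.unit_spec⟩
  · intro r
    rw [hwc 0 r]
    have h2 : ∀ w : ZMod n,
        ((unitaryCayley n).Adj 0 w ∧ (unitaryCayley n).Adj w r) ↔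
          (IsUnit w ∧ IsUnit (w - ((r.val : ℕ) : ZMod n))) := by
      intro w
      rw [ZMod.natCast_zmod_val]
      constructor
      · rintro ⟨⟨-, h1⟩, -, h2⟩
        refine ⟨?_, h2⟩
        rw [zero_sub] at h1
        simpa using h1.neg
      · rintro ⟨h1, h2⟩
        refine ⟨⟨fun h => h1.ne_zero h.symm, by rw [zero_sub]; exact h1.neg⟩,
          sub_ne_zero.mp h2.ne_zero, h2⟩
    rw [Nat.card_congr (Equiv.subtypeEquivRight h2)]
    exact Fcnt_formula r.val n (by omega)
end
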